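/- Define covariant derivatives of weight k by δ₁⁽ᵏ⁾(u) = ∂₁(u) − kHu and δ₂⁽ᵏ⁾(u) = ∂₂(u) − kHu, where ∂₁, ∂₂ are vector fields with [∂₁,∂₂] = H(∂₂−∂₁) and K = ∂₁H − ∂₂H. Then for every integer s ≥ 0 and every smooth function u, (δ₂⁽ˢ⁺¹⁾ ∘ δ₁⁽ˢ⁾ − δ₁⁽ˢ⁺¹⁾ ∘ δ₂⁽ˢ⁾)(u) = sK·u. -/

import Mathlib

noncomputable def vd (X : ℝ × ℝ → ℝ × ℝ) (g : ℝ × ℝ → ℝ) (z : ℝ × ℝ) : ℝ :=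
  fderiv ℝ g z (X z)

/-- Covariant derivative of weight `k`: `δᵢ⁽ᵏ⁾(u) = ∂ᵢ(u) - k H u`. -/
noncomputable def delk (X : ℝ × ℝ → ℝ × ℝ) (H : ℝ × ℝ → ℝ) (k : ℕ)
    (u : ℝ × ℝ → ℝ) (z : ℝ × ℝ) : ℝ :=
  vd X u z - (k : ℝ) * H z * u z

lemma contDiffOn_vd (U : Set (ℝ × ℝ)) (hU : IsOpen U) (X : ℝ × ℝ → ℝ × ℝ)
    (u : ℝ × ℝ → ℝ) (hX : ContDiffOn ℝ (⊤ : ℕ∞) X U)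
    (hu : ContDiffOn ℝ (⊤ : ℕ∞) u U) : ContDiffOn ℝ (⊤ : ℕ∞) (vd X u) U := by
  have hf : ContDiffOn ℝ (⊤ : ℕ∞) (fderiv ℝ u) U :=
    hu.fderiv_of_isOpen hU (by exact_mod_cast le_top)
  exact hf.clm_apply hX

lemma vd_delk (U : Set (ℝ × ℝ)) (hU : IsOpen U) (X Y : ℝ × ℝ → ℝ × ℝ)
    (H : ℝ × ℝ → ℝ) (s : ℕ) (u : ℝ × ℝ → ℝ)
    (hX : ContDiffOn ℝ (⊤ : ℕ∞) X U) (hH : ContDiffOn ℝ (⊤ : ℕ∞) H U)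
    (hu : ContDiffOn ℝ (⊤ : ℕ∞) u U) (z : ℝ × ℝ) (hz : z ∈ U) :
    vd Y (delk X H s u) z =
      vd Y (vd X u) z - (s : ℝ) * (vd Y H z * u z + H z * vd Y u z) := by
  have hnz : U ∈ nhds z := hU.mem_nhds hz
  have d1 : DifferentiableAt ℝ (vd X u) z :=
    (((contDiffOn_vd U hU X u hX hu).differentiableOn (by simp)).differentiableAt hnz)
  have dH : DifferentiableAt ℝ H z :=
    ((hH.differentiableOn (by simp)).differentiableAt hnz)
  have du : DifferentiableAt ℝ u z :=
    ((hu.differentiableOn (by simp)).differentiableAt hnz)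
  have heq : delk X H s u = fun w => vd X u w - (s : ℝ) * (H w * u w) := by
    funext w; simp [delk]; ring
  have hvd : vd X u = fun w => fderiv ℝ u w (X w) := rfl
  unfold vd
  rw [heq, fderiv_fun_sub d1 (DifferentiableAt.const_mul (a := fun w => H w * u w) (dH.mul du) _),
    fderiv_const_mul (a := fun w => H w * u w) (dH.mul du),
    fderiv_fun_mul dH du, ← hvd]
  simp only [ContinuousLinearMap.sub_apply, ContinuousLinearMap.smul_apply,
    ContinuousLinearMap.add_apply, smul_eq_mul]
  ring

/-- commutator relation
`δ₂⁽ˢ⁺¹⁾ ∘ δ₁⁽ˢ⁾ - δ₁⁽ˢ⁺¹⁾ ∘ δ₂⁽ˢ⁾ = s K` with `K = ∂₁(H) - ∂₂(H)`. -/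
theorem stmt_15 (U : Set (ℝ × ℝ)) (hU : IsOpen U)
    (X1 X2 : ℝ × ℝ → ℝ × ℝ) (H : ℝ × ℝ → ℝ)
    (hX1 : ContDiffOn ℝ (⊤ : ℕ∞) X1 U) (hX2 : ContDiffOn ℝ (⊤ : ℕ∞) X2 U)
    (hH : ContDiffOn ℝ (⊤ : ℕ∞) H U)
    -- `[∂₁, ∂₂] = H (∂₂ - ∂₁)`
    (hbr : ∀ g : ℝ × ℝ → ℝ, ContDiffOn ℝ (⊤ : ℕ∞) g U → ∀ z ∈ U,
      vd X1 (vd X2 g) z - vd X2 (vd X1 g) z = H z * (vd X2 g z - vd X1 g z)) :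
    ∀ s : ℕ, ∀ u : ℝ × ℝ → ℝ, ContDiffOn ℝ (⊤ : ℕ∞) u U → ∀ z ∈ U,
      delk X2 H (s + 1) (delk X1 H s u) z - delk X1 H (s + 1) (delk X2 H s u) z =
        (s : ℝ) * (vd X1 H z - vd X2 H z) * u z := by
  intro s u hu z hz
  have h1 := vd_delk U hU X1 X2 H s u hX1 hH hu z hz
  have h2 := vd_delk U hU X2 X1 H s u hX2 hH hu z hz
  have hb := hbr u hu z hz
  simp only [delk, h1, h2]
  push_cast
  nlinarith [hb, sq_nonneg (H z)]
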